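/- arXiv:0905.1994 — 3 statements merged into one kernel-verified Lean document; each statement's English description precedes it below -/
import Mathlib

section
/- Let θ>0, n≥1, z,z'∈ℂ with (zz'/θ)_n≠0, and let λ be a partition of n. Then M^{(n)}_{z,z',θ}(λ)=M^{(n)}_{−z/θ,−z'/θ,1/θ}(λ'), where λ' is the transposed diagram (note that (−z/θ)(−z'/θ)/(1/θ)=zz'/θ, so both sides have the same Pochhammer denominator). -/
open scoped BigOperators
open Polynomial

/-- The multidimensional Pochhammer symbol `(z)_{λ,θ}`. -/
noncomputable def pochP (z : ℂ) (θ : ℝ) (l : YoungDiagram) : ℂ :=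
  ∏ c ∈ l.cells, (z + (c.2 : ℂ) - (c.1 : ℂ) * (θ : ℂ))

/-- `H(λ,θ)`. -/
noncomputable def Hfun (l : YoungDiagram) (θ : ℝ) : ℝ :=
  ∏ c ∈ l.cells,
    ((l.rowLen c.1 : ℝ) - ((c.2 : ℝ) + 1) + ((l.colLen c.2 : ℝ) - ((c.1 : ℝ) + 1)) * θ + 1)

/-- `H'(λ,θ)`. -/
noncomputable def Hfun' (l : YoungDiagram) (θ : ℝ) : ℝ :=
  ∏ c ∈ l.cells,
    ((l.rowLen c.1 : ℝ) - ((c.2 : ℝ) + 1) + ((l.colLen c.2 : ℝ) - ((c.1 : ℝ) + 1)) * θ + θ)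

/-- The z-measure `M^{(n)}_{z,z',θ}(λ) = n!(z)_{λ,θ}(z')_{λ,θ} / ((t)_n H(λ,θ) H'(λ,θ))`,
`t = zz'/θ`. -/
noncomputable def zMeasureN (n : ℕ) (z z' : ℂ) (θ : ℝ) (l : YoungDiagram) : ℂ :=
  (Nat.factorial n : ℂ) * pochP z θ l * pochP z' θ l /
    ((ascPochhammer ℂ n).eval (z * z' / (θ : ℂ)) * (Hfun l θ : ℂ) * (Hfun' l θ : ℂ))


lemma prod_transpose_cells {M : Type*} [CommMonoid M] (l : YoungDiagram) (f : ℕ × ℕ → M) :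
    ∏ c ∈ l.transpose.cells, f c = ∏ c ∈ l.cells, f c.swap := by
  refine Finset.prod_bij' (fun c _ => c.swap) (fun c _ => c.swap) ?_ ?_ ?_ ?_ ?_ <;>
    simp [YoungDiagram.mem_cells, YoungDiagram.mem_transpose]

lemma pochP_transpose (z : ℂ) (θ : ℝ) (hθ : θ ≠ 0) (l : YoungDiagram) :
    pochP (-z / (θ : ℂ)) (1 / θ) l.transpose
      = (-(θ : ℂ)⁻¹) ^ l.cells.card * pochP z θ l := by
  have hθC : (θ : ℂ) ≠ 0 := Complex.ofReal_ne_zero.mpr hθ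
  unfold pochP
  rw [prod_transpose_cells, ← Finset.prod_const, ← Finset.prod_mul_distrib]
  refine Finset.prod_congr rfl fun c _ => ?_
  push_cast
  field_simp
  simp only [Prod.fst_swap, Prod.snd_swap]
  ring

lemma Hfun_transpose (θ : ℝ) (hθ : θ ≠ 0) (l : YoungDiagram) :
    Hfun l.transpose (1 / θ) = (1 / θ) ^ l.cells.card * Hfun' l θ := by
  unfold Hfun Hfun'
  rw [prod_transpose_cells, ← Finset.prod_const, ← Finset.prod_mul_distrib]
  refine Finset.prod_congr rfl fun c _ => ?_
  simp only [Prod.fst_swap, Prod.snd_swap, YoungDiagram.rowLen_transpose,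
    YoungDiagram.colLen_transpose]
  field_simp
  ring

lemma Hfun'_transpose (θ : ℝ) (hθ : θ ≠ 0) (l : YoungDiagram) :
    Hfun' l.transpose (1 / θ) = (1 / θ) ^ l.cells.card * Hfun l θ := by
  unfold Hfun Hfun'
  rw [prod_transpose_cells, ← Finset.prod_const, ← Finset.prod_mul_distrib]
  refine Finset.prod_congr rfl fun c _ => ?_
  simp only [Prod.fst_swap, Prod.snd_swap, YoungDiagram.rowLen_transpose,
    YoungDiagram.colLen_transpose]
  field_simp
  ring

/-- `M^{(n)}_{z,z',θ}(λ) = M^{(n)}_{-z/θ,-z'/θ,1/θ}(λ')`. -/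
theorem zMeasureN_transpose_symmetry (θ : ℝ) (hθ : 0 < θ) (n : ℕ) (hn : 1 ≤ n) (z z' : ℂ)
    (hpoch : (ascPochhammer ℂ n).eval (z * z' / (θ : ℂ)) ≠ 0)
    (l : YoungDiagram) (hl : l.cells.card = n) :
    zMeasureN n z z' θ l = zMeasureN n (-z / (θ : ℂ)) (-z' / (θ : ℂ)) (1 / θ) l.transpose := by
  have hθ0 : θ ≠ 0 := hθ.ne'
  have hθC : (θ : ℂ) ≠ 0 := Complex.ofReal_ne_zero.mpr hθ0
  have harg : -z / (θ : ℂ) * (-z' / (θ : ℂ)) / ((1 / θ : ℝ) : ℂ) = z * z' / (θ : ℂ) := by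
    push_cast
    field_simp
  unfold zMeasureN
  rw [pochP_transpose z θ hθ0 l, pochP_transpose z' θ hθ0 l, Hfun_transpose θ hθ0 l,
    Hfun'_transpose θ hθ0 l, harg, hl]
  have hc : ((θ : ℂ)⁻¹ ^ n * (θ : ℂ)⁻¹ ^ n) ≠ 0 :=
    mul_ne_zero (pow_ne_zero _ (inv_ne_zero hθC)) (pow_ne_zero _ (inv_ne_zero hθC))
  have hneg : (-(θ:ℂ)⁻¹) ^ n * (-(θ:ℂ)⁻¹) ^ n = (θ:ℂ)⁻¹ ^ n * (θ:ℂ)⁻¹ ^ n := by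
    rw [← mul_pow, ← mul_pow, neg_mul_neg]
  rw [eq_comm, ← mul_div_mul_left
    ((Nat.factorial n : ℂ) * pochP z θ l * pochP z' θ l)
    ((ascPochhammer ℂ n).eval (z * z' / (θ:ℂ)) * (Hfun l θ : ℂ) * (Hfun' l θ : ℂ)) hc]
  push_cast
  congr 1
  · calc (Nat.factorial n : ℂ) * ((-(θ:ℂ)⁻¹) ^ n * pochP z θ l) * ((-(θ:ℂ)⁻¹) ^ n * pochP z' θ l)
        = ((-(θ:ℂ)⁻¹) ^ n * (-(θ:ℂ)⁻¹) ^ n) *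
            ((Nat.factorial n : ℂ) * pochP z θ l * pochP z' θ l) := by ring
      _ = _ := by rw [hneg]
  · rw [one_div]
    ring
end

section
/- Fix θ>0 and n≥1. Suppose the pair (z,z') satisfies one of the following: (principal series) z∈ℂ∖(ℤ_{≤0}+ℤ_{≥0}θ) and z'=conj(z); (complementary series) θ is rational and z,z' are real numbers lying in the same open interval between two consecutive points of the lattice ℤ+ℤθ; (degenerate series) for some positive integer m, either (z=mθ and z'>(m−1)θ) or (z'=mθ and z>(m−1)θ) or (z=−m and z'<−m+1) or (z'=−m and z<−m+1). Then M^{(n)}_{z,z',θ}(λ)≥0 for every partition λ of n, i.e. M^{(n)}_{z,z',θ} is a probability measure on the set of partitions of n. -/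
open scoped BigOperators
open Polynomial

/-- Real version of `pochP`. -/
noncomputable def pochR (x θ : ℝ) (l : YoungDiagram) : ℝ :=
  ∏ c ∈ l.cells, (x + (c.2 : ℝ) - (c.1 : ℝ) * θ)

lemma pochP_ofReal (x θ : ℝ) (l : YoungDiagram) :
    pochP (x : ℂ) θ l = ((pochR x θ l : ℝ) : ℂ) := by
  unfold pochP pochR
  push_cast
  rfl

lemma pochP_conj (z : ℂ) (θ : ℝ) (l : YoungDiagram) :
    pochP ((starRingEnd ℂ) z) θ l = (starRingEnd ℂ) (pochP z θ l) := by
  unfold pochP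
  rw [map_prod]
  refine Finset.prod_congr rfl fun c _ => ?_
  simp [Complex.conj_ofReal]

lemma pochR_mul_nonneg {x x' θ : ℝ} {l : YoungDiagram}
    (h : ∀ c ∈ l.cells,
      0 ≤ (x + (c.2 : ℝ) - (c.1 : ℝ) * θ) * (x' + (c.2 : ℝ) - (c.1 : ℝ) * θ)) :
    0 ≤ pochR x θ l * pochR x' θ l := by
  unfold pochR
  rw [← Finset.prod_mul_distrib]
  exact Finset.prod_nonneg h

lemma Hfun_pos (l : YoungDiagram) {θ : ℝ} (hθ : 0 < θ) : 0 < Hfun l θ := by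
  unfold Hfun
  apply Finset.prod_pos
  intro c hc
  rw [YoungDiagram.mem_cells] at hc
  obtain ⟨i, j⟩ := c
  have h1 : j < l.rowLen i := YoungDiagram.mem_iff_lt_rowLen.mp hc
  have h2 : i < l.colLen j := YoungDiagram.mem_iff_lt_colLen.mp hc
  have r1 : (j : ℝ) + 1 ≤ (l.rowLen i : ℝ) := by exact_mod_cast h1
  have r2 : (i : ℝ) + 1 ≤ (l.colLen j : ℝ) := by exact_mod_cast h2
  nlinarith

lemma Hfun'_pos (l : YoungDiagram) {θ : ℝ} (hθ : 0 < θ) : 0 < Hfun' l θ := by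
  unfold Hfun'
  apply Finset.prod_pos
  intro c hc
  rw [YoungDiagram.mem_cells] at hc
  obtain ⟨i, j⟩ := c
  have h1 : j < l.rowLen i := YoungDiagram.mem_iff_lt_rowLen.mp hc
  have h2 : i < l.colLen j := YoungDiagram.mem_iff_lt_colLen.mp hc
  have r1 : (j : ℝ) + 1 ≤ (l.rowLen i : ℝ) := by exact_mod_cast h1
  have r2 : (i : ℝ) + 1 ≤ (l.colLen j : ℝ) := by exact_mod_cast h2
  nlinarith

lemma deg_pos (θ : ℝ) (hθ : 0 < θ) (m : ℕ) (hm : 0 < m) (r : ℝ)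
    (hr : ((m : ℝ) - 1) * θ < r) (l : YoungDiagram) :
    ∃ s : ℝ, 0 ≤ s ∧ pochP ((m : ℂ) * (θ : ℂ)) θ l * pochP (r : ℂ) θ l = (s : ℂ) := by
  have hz : ((m : ℂ) * (θ : ℂ)) = (((m : ℝ) * θ : ℝ) : ℂ) := by push_cast; ring
  rw [hz, pochP_ofReal, pochP_ofReal, ← Complex.ofReal_mul]
  refine ⟨_, ?_, rfl⟩
  by_cases hcell : (m, 0) ∈ l
  · have h0 : pochR ((m : ℝ) * θ) θ l = 0 := by
      unfold pochR
      apply Finset.prod_eq_zero ((YoungDiagram.mem_cells _).mpr hcell)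
      push_cast
      ring
    rw [h0, zero_mul]
  · apply pochR_mul_nonneg
    intro c hc
    rw [YoungDiagram.mem_cells] at hc
    obtain ⟨i, j⟩ := c
    have hcm : i < m := by
      by_contra hh
      push_neg at hh
      exact hcell (l.up_left_mem hh (Nat.zero_le _) hc)
    have h1 : (i : ℝ) ≤ (m : ℝ) - 1 := by
      have : (i : ℝ) + 1 ≤ (m : ℝ) := by exact_mod_cast hcm
      linarith
    have hj : (0 : ℝ) ≤ (j : ℝ) := Nat.cast_nonneg _
    have f1 : 0 < (m : ℝ) * θ + (j : ℝ) - (i : ℝ) * θ := by nlinarith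
    have f2 : 0 < r + (j : ℝ) - (i : ℝ) * θ := by nlinarith
    exact (mul_pos f1 f2).le

lemma deg_neg (θ : ℝ) (hθ : 0 < θ) (m : ℕ) (hm : 0 < m) (r : ℝ)
    (hr : r < -(m : ℝ) + 1) (l : YoungDiagram) :
    ∃ s : ℝ, 0 ≤ s ∧ pochP (-(m : ℂ)) θ l * pochP (r : ℂ) θ l = (s : ℂ) := by
  have hz : (-(m : ℂ)) = (((-(m : ℝ)) : ℝ) : ℂ) := by push_cast; ring
  rw [hz, pochP_ofReal, pochP_ofReal, ← Complex.ofReal_mul]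
  refine ⟨_, ?_, rfl⟩
  by_cases hcell : (0, m) ∈ l
  · have h0 : pochR (-(m : ℝ)) θ l = 0 := by
      unfold pochR
      apply Finset.prod_eq_zero ((YoungDiagram.mem_cells _).mpr hcell)
      push_cast
      ring
    rw [h0, zero_mul]
  · apply pochR_mul_nonneg
    intro c hc
    rw [YoungDiagram.mem_cells] at hc
    obtain ⟨i, j⟩ := c
    have hcm : j < m := by
      by_contra hh
      push_neg at hh
      exact hcell (l.up_left_mem (Nat.zero_le _) hh hc)
    have h1 : (j : ℝ) ≤ (m : ℝ) - 1 := by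
      have : (j : ℝ) + 1 ≤ (m : ℝ) := by exact_mod_cast hcm
      linarith
    have hi : (0 : ℝ) ≤ (i : ℝ) := Nat.cast_nonneg _
    have f1 : -(m : ℝ) + (j : ℝ) - (i : ℝ) * θ < 0 := by nlinarith
    have f2 : r + (j : ℝ) - (i : ℝ) * θ < 0 := by nlinarith
    exact (mul_pos_of_neg_of_neg f1 f2).le

/-- If `(z,z')` belongs to the principal, complementary, or degenerate series, then
`M^{(n)}_{z,z',θ}(λ)` is a nonnegative real number for every partition `λ` of `n`;
i.e. `M^{(n)}_{z,z',θ}` is a probability measure on partitions of `n`. -/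
theorem zMeasureN_nonneg (θ : ℝ) (hθ : 0 < θ) (n : ℕ) (hn : 1 ≤ n) (z z' : ℂ)
    (h :
      -- principal series: `z ∉ ℤ_{≤0} + ℤ_{≥0}θ` and `z' = conj z`
      ((¬ ∃ a b : ℕ, z = -(a : ℂ) + (b : ℂ) * (θ : ℂ)) ∧ z' = (starRingEnd ℂ) z) ∨
      -- complementary series: `θ` rational, `z, z'` real and in the same open interval
      -- between two consecutive points of the lattice `ℤ + ℤθ`
      ((∃ q : ℚ, (q : ℝ) = θ) ∧ ∃ x x' u v : ℝ,
        z = (x : ℂ) ∧ z' = (x' : ℂ) ∧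
        (∃ a b : ℤ, u = (a : ℝ) + (b : ℝ) * θ) ∧
        (∃ a b : ℤ, v = (a : ℝ) + (b : ℝ) * θ) ∧ u < v ∧
        (∀ w : ℝ, (∃ a b : ℤ, w = (a : ℝ) + (b : ℝ) * θ) → ¬(u < w ∧ w < v)) ∧
        u < x ∧ x < v ∧ u < x' ∧ x' < v) ∨
      -- degenerate series
      (∃ m : ℕ, 0 < m ∧
        ((z = (m : ℂ) * (θ : ℂ) ∧ ∃ r : ℝ, z' = (r : ℂ) ∧ ((m : ℝ) - 1) * θ < r) ∨
         (z' = (m : ℂ) * (θ : ℂ) ∧ ∃ r : ℝ, z = (r : ℂ) ∧ ((m : ℝ) - 1) * θ < r) ∨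
         (z = -(m : ℂ) ∧ ∃ r : ℝ, z' = (r : ℂ) ∧ r < -(m : ℝ) + 1) ∨
         (z' = -(m : ℂ) ∧ ∃ r : ℝ, z = (r : ℂ) ∧ r < -(m : ℝ) + 1))))
    (l : YoungDiagram) (hl : l.cells.card = n) :
    (zMeasureN n z z' θ l).im = 0 ∧ 0 ≤ (zMeasureN n z z' θ l).re := by
  have main : (∃ s : ℝ, 0 ≤ s ∧ pochP z θ l * pochP z' θ l = (s : ℂ)) ∧
      (∃ p : ℝ, 0 < p ∧ z * z' = (p : ℂ)) := by
    rcases h with ⟨hz, hz'⟩ |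
        ⟨-, x, x', u, v, rfl, rfl, -, -, huv, hno, hux, hxv, hux', hx'v⟩ |
        ⟨m, hm, hcase⟩
    · -- principal series
      constructor
      · refine ⟨Complex.normSq (pochP z θ l), Complex.normSq_nonneg _, ?_⟩
        rw [hz', pochP_conj, Complex.mul_conj]
      · have hz0 : z ≠ 0 := fun h0 => hz ⟨0, 0, by simp [h0]⟩
        refine ⟨Complex.normSq z, Complex.normSq_pos.mpr hz0, ?_⟩
        rw [hz', Complex.mul_conj]
    · -- complementary series
      have lat : ∀ w : ℝ, (∃ a b : ℤ, w = (a : ℝ) + (b : ℝ) * θ) → w ≤ u ∨ v ≤ w := by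
        intro w hw
        rcases le_or_gt w u with hh | hh
        · exact Or.inl hh
        rcases le_or_gt v w with hh' | hh'
        · exact Or.inr hh'
        exact absurd ⟨hh, hh'⟩ (hno w hw)
      have h0 : (0 : ℝ) ≤ u ∨ v ≤ 0 := lat 0 ⟨0, 0, by simp⟩
      constructor
      · rw [pochP_ofReal, pochP_ofReal, ← Complex.ofReal_mul]
        refine ⟨_, ?_, rfl⟩
        apply pochR_mul_nonneg
        intro c hc
        have hw := lat ((c.1 : ℝ) * θ - (c.2 : ℝ))
          ⟨-(c.2 : ℤ), (c.1 : ℤ), by push_cast; ring⟩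
        rcases hw with hw | hw
        · exact (mul_pos (by linarith) (by linarith)).le
        · exact (mul_pos_of_neg_of_neg (by linarith) (by linarith)).le
      · refine ⟨x * x', ?_, by push_cast; ring⟩
        rcases h0 with h0 | h0
        · exact mul_pos (by linarith) (by linarith)
        · exact mul_pos_of_neg_of_neg (by linarith) (by linarith)
    · -- degenerate series
      have hm1 : (1 : ℝ) ≤ (m : ℝ) := by exact_mod_cast hm
      rcases hcase with ⟨rfl, r, rfl, hr⟩ | ⟨hz', r, rfl, hr⟩ |
          ⟨rfl, r, rfl, hr⟩ | ⟨hz', r, rfl, hr⟩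
      · have hr0 : 0 < r := lt_of_le_of_lt (by nlinarith) hr
        refine ⟨deg_pos θ hθ m hm r hr l, ⟨(m : ℝ) * θ * r, ?_, by push_cast; ring⟩⟩
        positivity
      · subst hz'
        have hr0 : 0 < r := lt_of_le_of_lt (by nlinarith) hr
        obtain ⟨s, hs0, hs⟩ := deg_pos θ hθ m hm r hr l
        refine ⟨⟨s, hs0, by rw [mul_comm]; exact hs⟩,
          ⟨(m : ℝ) * θ * r, ?_, by push_cast; ring⟩⟩
        positivity
      · have hr0 : r < 0 := lt_of_lt_of_le hr (by linarith)
        refine ⟨deg_neg θ hθ m hm r hr l, ⟨(-(m : ℝ)) * r, ?_, by push_cast; ring⟩⟩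
        exact mul_pos_of_neg_of_neg (by linarith) hr0
      · subst hz'
        have hr0 : r < 0 := lt_of_lt_of_le hr (by linarith)
        obtain ⟨s, hs0, hs⟩ := deg_neg θ hθ m hm r hr l
        refine ⟨⟨s, hs0, by rw [mul_comm]; exact hs⟩,
          ⟨(-(m : ℝ)) * r, ?_, by push_cast; ring⟩⟩
        exact mul_pos_of_neg_of_neg (by linarith) hr0
  obtain ⟨⟨s, hs0, hs⟩, ⟨p, hp0, hp⟩⟩ := main
  have hasc : (ascPochhammer ℂ n).eval (z * z' / (θ : ℂ)) =
      (((ascPochhammer ℝ n).eval (p / θ) : ℝ) : ℂ) := by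
    rw [hp, show ((p : ℂ) / (θ : ℂ)) = (((p / θ : ℝ)) : ℂ) by push_cast; ring]
    rw [ascPochhammer_eval₂ Complex.ofRealHom n]
    rw [show ((p / θ : ℝ) : ℂ) = Complex.ofRealHom (p / θ) from rfl]
    rw [Polynomial.eval₂_at_apply]
    rfl
  have hA : 0 < (ascPochhammer ℝ n).eval (p / θ) :=
    ascPochhammer_pos n _ (div_pos hp0 hθ)
  have hH := Hfun_pos l hθ
  have hH' := Hfun'_pos l hθ
  have key : zMeasureN n z z' θ l =
      ((((n.factorial : ℝ) * s /
        ((ascPochhammer ℝ n).eval (p / θ) * Hfun l θ * Hfun' l θ)) : ℝ) : ℂ) := by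
    unfold zMeasureN
    rw [mul_assoc, hs, hasc]
    push_cast
    ring
  rw [key]
  refine ⟨Complex.ofReal_im _, ?_⟩
  rw [Complex.ofReal_re]
  apply div_nonneg
  · exact mul_nonneg (Nat.cast_nonneg _) hs0
  · positivity
end

section
/- Fix an integer N≥1, β>0 and ξ∈(0,1), and set z=2N, z'=2N+β−2, θ=2. For a partition λ with at most N nonzero parts put x̃_{N−i+1}(λ)=λ_i−2i+2N for i=1,…,N (so x̃_1<⋯<x̃_N are distinct points of ℤ_{≥0}). Then: (i) M_{z,z',ξ,θ=2}(λ)=0 for every partition λ with more than N nonzero parts; (ii) there is a constant c>0, depending only on N, β, ξ and not on λ, such that for every partition λ with at most N nonzero parts, M_{z,z',ξ,θ=2}(λ) = c·∏_{i=1}^{N} ((β)_{x̃_i}/x̃_i!)·ξ^{x̃_i} · ∏_{1≤i<j≤N} (x̃_i−x̃_j)²((x̃_i−x̃_j)²−1), where (β)_x=β(β+1)⋯(β+x−1). -/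
open scoped BigOperators
open Polynomial

/-- The mixed z-measure `M_{z,z',ξ,θ}(λ)`. -/
noncomputable def zMeasureMix (z z' : ℂ) (ξ θ : ℝ) (l : YoungDiagram) : ℂ :=
  ((1 : ℂ) - (ξ : ℂ)) ^ (z * z' / (θ : ℂ)) * (ξ : ℂ) ^ l.cells.card *
    pochP z θ l * pochP z' θ l / ((Hfun l θ : ℂ) * (Hfun' l θ : ℂ))

/-- For a diagram `λ` with at most `N` rows, the point
`x̃_{N-i+1} = λ_i - 2i + 2N` (1-based `i = 1,…,N`); in 0-based coordinates, for `k : Fin N`,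
`x̃_{k+1} = λ_{N-k} + 2k`. -/
def xPt (N : ℕ) (l : YoungDiagram) (k : Fin N) : ℕ :=
  l.rowLen (N - 1 - (k : ℕ)) + 2 * (k : ℕ)

/-- The Meixner weight `(β)_x ξ^x / x!`. -/
noncomputable def meixnerW (β ξ : ℝ) (x : ℕ) : ℝ :=
  (ascPochhammer ℝ x).eval β / (Nat.factorial x : ℝ) * ξ ^ x

open Finset Nat


/-- telescoping product identity -/
lemma tele (A : ℝ) (L : ℕ) :
    A * (A - 1) * ∏ j ∈ range L, (A - j - 2) =
    (A - L) * (A - L - 1) * ∏ j ∈ range L, (A - j) := by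
  induction L with
  | zero => simp
  | succ L ih =>
    rw [prod_range_succ, prod_range_succ]
    push_cast
    linear_combination (A - (L : ℝ) - 2) * ih

lemma prod_sub_eq_factorial (m : ℕ) : ∏ j ∈ range m, ((m : ℝ) - j) = (m ! : ℝ) := by
  induction m with
  | zero => simp
  | succ m ih =>
    rw [prod_range_succ']
    have h : ∀ j ∈ range m, ((m + 1 : ℕ) : ℝ) - ((j : ℕ) + 1 : ℕ) = (m : ℝ) - j := by
      intros; push_cast; ring
    rw [prod_congr rfl h, ih]
    push_cast [Nat.factorial_succ]
    ring

lemma prod_sub_eq_factorial' (m : ℕ) : ∏ j ∈ range m, ((m : ℝ) + 1 - j) = ((m + 1)! : ℝ) := by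
  induction m with
  | zero => simp
  | succ m ih =>
    rw [prod_range_succ']
    have h : ∀ j ∈ range m, ((m + 1 : ℕ) : ℝ) + 1 - ((j : ℕ) + 1 : ℕ) = (m : ℝ) + 1 - j := by
      intros; push_cast; ring
    rw [prod_congr rfl h, ih]
    push_cast [Nat.factorial_succ]
    ring

lemma asc_eval (β : ℝ) (n : ℕ) : (ascPochhammer ℝ n).eval β = ∏ j ∈ range n, (β + j) := by
  induction n with
  | zero => simp
  | succ n ih => rw [ascPochhammer_succ_eval, prod_range_succ, ih]

lemma asc_pos {β : ℝ} (hβ : 0 < β) (n : ℕ) : 0 < (ascPochhammer ℝ n).eval β := by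
  rw [asc_eval]
  exact prod_pos fun j _ => by positivity

lemma fact_mul_prod (c m : ℕ) :
    (c ! : ℝ) * ∏ j ∈ range m, ((c : ℝ) + 1 + j) = ((c + m)! : ℝ) := by
  induction m with
  | zero => simp
  | succ m ih =>
    rw [prod_range_succ, ← mul_assoc, ih]
    have : c + (m + 1) = (c + m) + 1 := by omega
    rw [this]
    push_cast [Nat.factorial_succ]
    ring


def cc (N : ℕ) (r : ℕ → ℕ) (j : ℕ) : ℕ := ((range N).filter fun i => j < r i).card

def xv (N : ℕ) (r : ℕ → ℕ) (i : ℕ) : ℕ := r i + 2 * (N - 1 - i)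

lemma xv_cast {N i : ℕ} (r : ℕ → ℕ) (h : i < N) :
    (xv N r i : ℝ) = r i + 2 * ((N : ℝ) - 1 - i) := by
  unfold xv
  have h1 : N - 1 - i = N - (1 + i) := by omega
  rw [h1, Nat.cast_add, Nat.cast_mul, Nat.cast_sub (by omega)]
  push_cast; ring

lemma xv_succ_cast {N i : ℕ} (r : ℕ → ℕ) (h : i < N) :
    (xv (N + 1) r i : ℝ) = (xv N r i : ℝ) + 2 := by
  rw [xv_cast r (by omega), xv_cast r h]
  push_cast; ring

lemma xv_last (N : ℕ) (r : ℕ → ℕ) : xv (N + 1) r N = r N := by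
  unfold xv; omega

lemma cc_full {N : ℕ} {r : ℕ → ℕ} (hr : ∀ a b : ℕ, a ≤ b → r b ≤ r a) {j : ℕ}
    (hj : j < r N) : cc (N + 1) r j = N + 1 := by
  unfold cc
  rw [filter_true_of_mem, card_range]
  intro i hi
  rw [mem_range] at hi
  exact lt_of_lt_of_le hj (hr i N (by omega))

lemma cc_fullN {N : ℕ} {r : ℕ → ℕ} (hr : ∀ a b : ℕ, a ≤ b → r b ≤ r a) {j : ℕ}
    (hj : j < r N) : cc N r j = N := by
  unfold cc
  rw [filter_true_of_mem, card_range]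
  intro i hi
  rw [mem_range] at hi
  exact lt_of_lt_of_le hj (hr i N (by omega))

lemma cc_drop {N : ℕ} {r : ℕ → ℕ} {j : ℕ} (hj : r N ≤ j) :
    cc (N + 1) r j = cc N r j := by
  unfold cc
  rw [range_add_one, filter_insert, if_neg (by omega)]

lemma Ioo_succ_eq (i N : ℕ) (h : i < N) : Ioo i (N + 1) = insert N (Ioo i N) := by
  ext k
  simp only [mem_Ioo, mem_insert]
  omega

lemma Hmain (r : ℕ → ℕ) (hr : ∀ a b : ℕ, a ≤ b → r b ≤ r a) (N : ℕ) :
    (∏ i ∈ range N, ∏ j ∈ range (r i),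
        ((r i : ℝ) - j + 2 * ((cc N r j : ℝ) - i) - 2)) *
      ∏ i ∈ range N, ∏ k ∈ Ioo i N,
        (((xv N r i : ℝ) - xv N r k) * ((xv N r i : ℝ) - xv N r k - 1)) =
    ∏ i ∈ range N, ((xv N r i)! : ℝ) := by
  induction N with
  | zero => simp
  | succ N ih =>
    have hrowN : ∏ j ∈ range (r N), ((r N : ℝ) - j + 2 * ((cc (N+1) r j : ℝ) - N) - 2)
        = ((r N)! : ℝ) := by
      rw [← prod_sub_eq_factorial (r N)]
      refine prod_congr rfl fun j hj => ?_
      rw [mem_range] at hj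
      rw [cc_full hr hj]
      push_cast; ring
    have hsplit1 : ∀ i ∈ range N,
        ∏ j ∈ range (r i), ((r i : ℝ) - j + 2 * ((cc (N+1) r j : ℝ) - i) - 2)
        = (∏ j ∈ range (r N), (((xv N r i : ℝ) + 2) - j)) *
          ∏ j ∈ Ico (r N) (r i), ((r i : ℝ) - j + 2 * ((cc N r j : ℝ) - i) - 2) := by
      intro i hi
      rw [mem_range] at hi
      have hLr : r N ≤ r i := hr i N (le_of_lt hi)
      rw [range_eq_Ico, ← prod_Ico_consecutive _ (Nat.zero_le (r N)) hLr, ← range_eq_Ico]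
      congr 1
      · refine prod_congr rfl fun j hj => ?_
        rw [mem_range] at hj
        rw [cc_full hr hj, xv_cast r hi]
        push_cast; ring
      · refine prod_congr rfl fun j hj => ?_
        rw [mem_Ico] at hj
        rw [cc_drop hj.1]
    have hsplit2 : ∀ i ∈ range N,
        ∏ j ∈ range (r i), ((r i : ℝ) - j + 2 * ((cc N r j : ℝ) - i) - 2)
        = (∏ j ∈ range (r N), (((xv N r i : ℝ) + 2) - j - 2)) *
          ∏ j ∈ Ico (r N) (r i), ((r i : ℝ) - j + 2 * ((cc N r j : ℝ) - i) - 2) := by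
      intro i hi
      rw [mem_range] at hi
      have hLr : r N ≤ r i := hr i N (le_of_lt hi)
      rw [range_eq_Ico, ← prod_Ico_consecutive _ (Nat.zero_le (r N)) hLr, ← range_eq_Ico]
      congr 1
      refine prod_congr rfl fun j hj => ?_
      rw [mem_range] at hj
      rw [cc_fullN hr hj, xv_cast r hi]
      push_cast; ring
    have hpairs : ∀ i ∈ range N,
        ∏ k ∈ Ioo i (N+1),
          (((xv (N+1) r i : ℝ) - xv (N+1) r k) * ((xv (N+1) r i : ℝ) - xv (N+1) r k - 1))
        = (((((xv N r i : ℝ) + 2) - r N) * ((((xv N r i : ℝ) + 2) - r N) - 1)) *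
          ∏ k ∈ Ioo i N, (((xv N r i : ℝ) - xv N r k) * ((xv N r i : ℝ) - xv N r k - 1))) := by
      intro i hi
      rw [mem_range] at hi
      rw [Ioo_succ_eq i N hi, prod_insert (by simp)]
      congr 1
      · rw [xv_succ_cast r hi, xv_last]
      · refine prod_congr rfl fun k hk => ?_
        rw [mem_Ioo] at hk
        rw [xv_succ_cast r hi, xv_succ_cast r hk.2]
        ring
    have hxfN : ∀ i ∈ range N,
        ((xv (N+1) r i)! : ℝ)
        = ((((xv N r i : ℝ) + 2) * (((xv N r i : ℝ) + 2) - 1)) * ((xv N r i)! : ℝ)) := by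
      intro i hi
      rw [mem_range] at hi
      have h2 : xv (N+1) r i = (xv N r i + 1) + 1 := by unfold xv; omega
      rw [h2, Nat.factorial_succ, Nat.factorial_succ]
      push_cast; ring
    have hIooN : Ioo N (N+1) = (∅ : Finset ℕ) := by
      ext k; simp only [mem_Ioo, notMem_empty, iff_false]; omega
    rw [prod_range_succ, prod_range_succ, prod_range_succ, hIooN, prod_empty, mul_one,
      hrowN, xv_last, prod_congr rfl hsplit1, prod_congr rfl hpairs, prod_congr rfl hxfN]
    have e1 : ∏ i ∈ range N, ((∏ j ∈ range (r N), (((xv N r i : ℝ) + 2) - j)) *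
        ∏ j ∈ Ico (r N) (r i), ((r i : ℝ) - j + 2 * ((cc N r j : ℝ) - i) - 2))
        = (∏ i ∈ range N, ∏ j ∈ range (r N), (((xv N r i : ℝ) + 2) - j)) *
          ∏ i ∈ range N, ∏ j ∈ Ico (r N) (r i), ((r i : ℝ) - j + 2 * ((cc N r j : ℝ) - i) - 2) :=
      prod_mul_distrib
    have e2 : ∏ i ∈ range N, ((((((xv N r i : ℝ) + 2) - r N) * ((((xv N r i : ℝ) + 2) - r N) - 1)) *
        ∏ k ∈ Ioo i N, (((xv N r i : ℝ) - xv N r k) * ((xv N r i : ℝ) - xv N r k - 1))))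
        = (∏ i ∈ range N, ((((xv N r i : ℝ) + 2) - r N) * ((((xv N r i : ℝ) + 2) - r N) - 1))) *
          ∏ i ∈ range N, ∏ k ∈ Ioo i N,
            (((xv N r i : ℝ) - xv N r k) * ((xv N r i : ℝ) - xv N r k - 1)) :=
      prod_mul_distrib
    have e3 : ∏ i ∈ range N, ((((xv N r i : ℝ) + 2) * (((xv N r i : ℝ) + 2) - 1)) * ((xv N r i)! : ℝ))
        = (∏ i ∈ range N, (((xv N r i : ℝ) + 2) * (((xv N r i : ℝ) + 2) - 1))) *
          ∏ i ∈ range N, ((xv N r i)! : ℝ) :=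
      prod_mul_distrib
    have e4 : ∏ i ∈ range N, ((∏ j ∈ range (r N), (((xv N r i : ℝ) + 2) - j - 2)) *
        ∏ j ∈ Ico (r N) (r i), ((r i : ℝ) - j + 2 * ((cc N r j : ℝ) - i) - 2))
        = (∏ i ∈ range N, ∏ j ∈ range (r N), (((xv N r i : ℝ) + 2) - j - 2)) *
          ∏ i ∈ range N, ∏ j ∈ Ico (r N) (r i), ((r i : ℝ) - j + 2 * ((cc N r j : ℝ) - i) - 2) :=
      prod_mul_distrib
    rw [e1, e2, e3]
    rw [prod_congr rfl hsplit2, e4] at ih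
    have key : (∏ i ∈ range N, (((xv N r i : ℝ) + 2) * (((xv N r i : ℝ) + 2) - 1))) *
        ∏ i ∈ range N, ∏ j ∈ range (r N), (((xv N r i : ℝ) + 2) - j - 2)
        = (∏ i ∈ range N, ((((xv N r i : ℝ) + 2) - r N) * ((((xv N r i : ℝ) + 2) - r N) - 1))) *
          ∏ i ∈ range N, ∏ j ∈ range (r N), (((xv N r i : ℝ) + 2) - j) := by
      rw [← prod_mul_distrib, ← prod_mul_distrib]
      refine prod_congr rfl fun i hi => ?_
      linear_combination tele ((xv N r i : ℝ) + 2) (r N)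
    set P' := ∏ i ∈ range N, ∏ j ∈ range (r N), (((xv N r i : ℝ) + 2) - j) with hP'
    set P2 := ∏ i ∈ range N, ∏ j ∈ range (r N), (((xv N r i : ℝ) + 2) - j - 2) with hP2
    set Q := ∏ i ∈ range N, ∏ j ∈ Ico (r N) (r i),
      ((r i : ℝ) - j + 2 * ((cc N r j : ℝ) - i) - 2) with hQ
    set G := ∏ i ∈ range N, ∏ k ∈ Ioo i N,
      (((xv N r i : ℝ) - xv N r k) * ((xv N r i : ℝ) - xv N r k - 1)) with hG
    set T := ∏ i ∈ range N, ((((xv N r i : ℝ) + 2) - r N) * ((((xv N r i : ℝ) + 2) - r N) - 1)) with hT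
    set AA := ∏ i ∈ range N, (((xv N r i : ℝ) + 2) * (((xv N r i : ℝ) + 2) - 1)) with hAA
    set XF := ∏ i ∈ range N, ((xv N r i)! : ℝ) with hXF
    linear_combination ((r N)! : ℝ) * AA * ih - ((r N)! : ℝ) * Q * G * key

lemma Hmain' (r : ℕ → ℕ) (hr : ∀ a b : ℕ, a ≤ b → r b ≤ r a) (N : ℕ) :
    (∏ i ∈ range N, ∏ j ∈ range (r i),
        ((r i : ℝ) - j + 2 * ((cc N r j : ℝ) - i) - 1)) *
      ∏ i ∈ range N, ∏ k ∈ Ioo i N,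
        (((xv N r i : ℝ) - xv N r k) * ((xv N r i : ℝ) - xv N r k + 1)) =
    ∏ i ∈ range N, ((xv N r i + 1)! : ℝ) := by
  induction N with
  | zero => simp
  | succ N ih =>
    have hrowN : ∏ j ∈ range (r N), ((r N : ℝ) - j + 2 * ((cc (N+1) r j : ℝ) - N) - 1)
        = (((r N) + 1)! : ℝ) := by
      rw [← prod_sub_eq_factorial' (r N)]
      refine prod_congr rfl fun j hj => ?_
      rw [mem_range] at hj
      rw [cc_full hr hj]
      push_cast; ring
    have hsplit1 : ∀ i ∈ range N,
        ∏ j ∈ range (r i), ((r i : ℝ) - j + 2 * ((cc (N+1) r j : ℝ) - i) - 1)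
        = (∏ j ∈ range (r N), (((xv N r i : ℝ) + 3) - j)) *
          ∏ j ∈ Ico (r N) (r i), ((r i : ℝ) - j + 2 * ((cc N r j : ℝ) - i) - 1) := by
      intro i hi
      rw [mem_range] at hi
      have hLr : r N ≤ r i := hr i N (le_of_lt hi)
      rw [range_eq_Ico, ← prod_Ico_consecutive _ (Nat.zero_le (r N)) hLr, ← range_eq_Ico]
      congr 1
      · refine prod_congr rfl fun j hj => ?_
        rw [mem_range] at hj
        rw [cc_full hr hj, xv_cast r hi]
        push_cast; ring
      · refine prod_congr rfl fun j hj => ?_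
        rw [mem_Ico] at hj
        rw [cc_drop hj.1]
    have hsplit2 : ∀ i ∈ range N,
        ∏ j ∈ range (r i), ((r i : ℝ) - j + 2 * ((cc N r j : ℝ) - i) - 1)
        = (∏ j ∈ range (r N), (((xv N r i : ℝ) + 3) - j - 2)) *
          ∏ j ∈ Ico (r N) (r i), ((r i : ℝ) - j + 2 * ((cc N r j : ℝ) - i) - 1) := by
      intro i hi
      rw [mem_range] at hi
      have hLr : r N ≤ r i := hr i N (le_of_lt hi)
      rw [range_eq_Ico, ← prod_Ico_consecutive _ (Nat.zero_le (r N)) hLr, ← range_eq_Ico]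
      congr 1
      refine prod_congr rfl fun j hj => ?_
      rw [mem_range] at hj
      rw [cc_fullN hr hj, xv_cast r hi]
      push_cast; ring
    have hpairs : ∀ i ∈ range N,
        ∏ k ∈ Ioo i (N+1),
          (((xv (N+1) r i : ℝ) - xv (N+1) r k) * ((xv (N+1) r i : ℝ) - xv (N+1) r k + 1))
        = (((((xv N r i : ℝ) + 3) - r N) * ((((xv N r i : ℝ) + 3) - r N) - 1)) *
          ∏ k ∈ Ioo i N, (((xv N r i : ℝ) - xv N r k) * ((xv N r i : ℝ) - xv N r k + 1))) := by
      intro i hi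
      rw [mem_range] at hi
      rw [Ioo_succ_eq i N hi, prod_insert (by simp)]
      congr 1
      · rw [xv_succ_cast r hi, xv_last]
        ring
      · refine prod_congr rfl fun k hk => ?_
        rw [mem_Ioo] at hk
        rw [xv_succ_cast r hi, xv_succ_cast r hk.2]
        ring
    have hxfN : ∀ i ∈ range N,
        ((xv (N+1) r i + 1)! : ℝ)
        = ((((xv N r i : ℝ) + 3) * (((xv N r i : ℝ) + 3) - 1)) * ((xv N r i + 1)! : ℝ)) := by
      intro i hi
      rw [mem_range] at hi
      have h2 : xv (N+1) r i + 1 = ((xv N r i + 1) + 1) + 1 := by unfold xv; omega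
      rw [h2, Nat.factorial_succ, Nat.factorial_succ]
      push_cast; ring
    have hIooN : Ioo N (N+1) = (∅ : Finset ℕ) := by
      ext k; simp only [mem_Ioo, notMem_empty, iff_false]; omega
    rw [prod_range_succ, prod_range_succ, prod_range_succ, hIooN, prod_empty, mul_one,
      hrowN, xv_last, prod_congr rfl hsplit1, prod_congr rfl hpairs, prod_congr rfl hxfN]
    have e1 : ∏ i ∈ range N, ((∏ j ∈ range (r N), (((xv N r i : ℝ) + 3) - j)) *
        ∏ j ∈ Ico (r N) (r i), ((r i : ℝ) - j + 2 * ((cc N r j : ℝ) - i) - 1))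
        = (∏ i ∈ range N, ∏ j ∈ range (r N), (((xv N r i : ℝ) + 3) - j)) *
          ∏ i ∈ range N, ∏ j ∈ Ico (r N) (r i), ((r i : ℝ) - j + 2 * ((cc N r j : ℝ) - i) - 1) :=
      prod_mul_distrib
    have e2 : ∏ i ∈ range N, ((((((xv N r i : ℝ) + 3) - r N) * ((((xv N r i : ℝ) + 3) - r N) - 1)) *
        ∏ k ∈ Ioo i N, (((xv N r i : ℝ) - xv N r k) * ((xv N r i : ℝ) - xv N r k + 1))))
        = (∏ i ∈ range N, ((((xv N r i : ℝ) + 3) - r N) * ((((xv N r i : ℝ) + 3) - r N) - 1))) *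
          ∏ i ∈ range N, ∏ k ∈ Ioo i N,
            (((xv N r i : ℝ) - xv N r k) * ((xv N r i : ℝ) - xv N r k + 1)) :=
      prod_mul_distrib
    have e3 : ∏ i ∈ range N, ((((xv N r i : ℝ) + 3) * (((xv N r i : ℝ) + 3) - 1)) * ((xv N r i + 1)! : ℝ))
        = (∏ i ∈ range N, (((xv N r i : ℝ) + 3) * (((xv N r i : ℝ) + 3) - 1))) *
          ∏ i ∈ range N, ((xv N r i + 1)! : ℝ) :=
      prod_mul_distrib
    have e4 : ∏ i ∈ range N, ((∏ j ∈ range (r N), (((xv N r i : ℝ) + 3) - j - 2)) *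
        ∏ j ∈ Ico (r N) (r i), ((r i : ℝ) - j + 2 * ((cc N r j : ℝ) - i) - 1))
        = (∏ i ∈ range N, ∏ j ∈ range (r N), (((xv N r i : ℝ) + 3) - j - 2)) *
          ∏ i ∈ range N, ∏ j ∈ Ico (r N) (r i), ((r i : ℝ) - j + 2 * ((cc N r j : ℝ) - i) - 1) :=
      prod_mul_distrib
    rw [e1, e2, e3]
    rw [prod_congr rfl hsplit2, e4] at ih
    have key : (∏ i ∈ range N, (((xv N r i : ℝ) + 3) * (((xv N r i : ℝ) + 3) - 1))) *
        ∏ i ∈ range N, ∏ j ∈ range (r N), (((xv N r i : ℝ) + 3) - j - 2)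
        = (∏ i ∈ range N, ((((xv N r i : ℝ) + 3) - r N) * ((((xv N r i : ℝ) + 3) - r N) - 1))) *
          ∏ i ∈ range N, ∏ j ∈ range (r N), (((xv N r i : ℝ) + 3) - j) := by
      rw [← prod_mul_distrib, ← prod_mul_distrib]
      refine prod_congr rfl fun i hi => ?_
      linear_combination tele ((xv N r i : ℝ) + 3) (r N)
    set P' := ∏ i ∈ range N, ∏ j ∈ range (r N), (((xv N r i : ℝ) + 3) - j) with hP'
    set P2 := ∏ i ∈ range N, ∏ j ∈ range (r N), (((xv N r i : ℝ) + 3) - j - 2) with hP2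
    set Q := ∏ i ∈ range N, ∏ j ∈ Ico (r N) (r i),
      ((r i : ℝ) - j + 2 * ((cc N r j : ℝ) - i) - 1) with hQ
    set G := ∏ i ∈ range N, ∏ k ∈ Ioo i N,
      (((xv N r i : ℝ) - xv N r k) * ((xv N r i : ℝ) - xv N r k + 1)) with hG
    set T := ∏ i ∈ range N, ((((xv N r i : ℝ) + 3) - r N) * ((((xv N r i : ℝ) + 3) - r N) - 1)) with hT
    set AA := ∏ i ∈ range N, (((xv N r i : ℝ) + 3) * (((xv N r i : ℝ) + 3) - 1)) with hAA
    set XF := ∏ i ∈ range N, ((xv N r i + 1)! : ℝ) with hXF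
    linear_combination (((r N) + 1)! : ℝ) * AA * ih - (((r N) + 1)! : ℝ) * Q * G * key




lemma cells_prod {M : Type*} [CommMonoid M] (l : YoungDiagram) (N : ℕ)
    (hl : l.colLen 0 ≤ N) (f : ℕ × ℕ → M) :
    ∏ c ∈ l.cells, f c = ∏ i ∈ range N, ∏ j ∈ range (l.rowLen i), f (i, j) := by
  rw [Finset.prod_sigma']
  refine Finset.prod_bij' (fun c _ => (⟨c.1, c.2⟩ : Σ _ : ℕ, ℕ)) (fun x _ => ((x.1, x.2) : ℕ × ℕ))
    ?_ ?_ ?_ ?_ ?_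
  · rintro ⟨i, j⟩ hc
    simp only [Finset.mem_sigma, mem_range]
    rw [YoungDiagram.mem_cells] at hc
    constructor
    · have h0 : (i, 0) ∈ l := l.up_left_mem (le_refl i) (Nat.zero_le j) hc
      rw [YoungDiagram.mem_iff_lt_colLen] at h0
      omega
    · rw [← YoungDiagram.mem_iff_lt_rowLen]
      exact hc
  · rintro ⟨i, j⟩ hx
    simp only [Finset.mem_sigma, mem_range] at hx
    rw [YoungDiagram.mem_cells, YoungDiagram.mem_iff_lt_rowLen]
    exact hx.2
  · intro x hx; rfl
  · intro c hc; rfl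
  · intro x hx; rfl

lemma colLen_eq_cc (l : YoungDiagram) (N : ℕ) (hl : l.colLen 0 ≤ N) (j : ℕ) :
    cc N l.rowLen j = l.colLen j := by
  unfold cc
  have h : (range N).filter (fun i => j < l.rowLen i) = range (l.colLen j) := by
    ext i
    simp only [mem_filter, mem_range]
    have h1 : j < l.rowLen i ↔ (i, j) ∈ l := by rw [YoungDiagram.mem_iff_lt_rowLen]
    have h2 : (i, j) ∈ l ↔ i < l.colLen j := YoungDiagram.mem_iff_lt_colLen
    have h3 : l.colLen j ≤ l.colLen 0 := l.colLen_anti 0 j (Nat.zero_le j)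
    constructor
    · rintro ⟨-, hi⟩; rw [h1, h2] at hi; exact hi
    · intro hi; exact ⟨by omega, by rw [h1, h2]; exact hi⟩
  rw [h, card_range]

lemma pochP_real (a θ : ℝ) (l : YoungDiagram) :
    pochP ((a : ℝ) : ℂ) θ l = ((∏ c ∈ l.cells, (a + (c.2 : ℝ) - (c.1 : ℝ) * θ) : ℝ) : ℂ) := by
  unfold pochP
  rw [Complex.ofReal_prod]
  exact prod_congr rfl fun c _ => by push_cast; ring

lemma row_lemma (β ξ : ℝ) (b m : ℕ) :
    (ξ ^ (2*b) * ((2*b+1)! : ℝ) * (ascPochhammer ℝ (2*b)).eval β) *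
      (ξ ^ m * ((∏ j ∈ range m, (((2*b+1 : ℕ) : ℝ) + 1 + j)) *
              ∏ j ∈ range m, (β + ((2*b : ℕ) : ℝ) + j))) =
    meixnerW β ξ (m + 2*b) * (((m + 2*b)! : ℝ) * ((m + 2*b + 1)! : ℝ)) := by
  have e1 : (((2*b+1)! : ℝ)) * ∏ j ∈ range m, (((2*b+1 : ℕ) : ℝ) + 1 + j)
      = ((m + 2*b + 1)! : ℝ) := by
    rw [fact_mul_prod (2*b+1) m, show 2*b+1+m = m+2*b+1 from by omega]
  have e2 : (ascPochhammer ℝ (2*b)).eval β * ∏ j ∈ range m, (β + ((2*b : ℕ) : ℝ) + j)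
      = (ascPochhammer ℝ (m + 2*b)).eval β := by
    simp only [asc_eval]
    rw [show m + 2*b = 2*b + m from by omega, prod_range_add]
    congr 1
    exact prod_congr rfl fun j _ => by push_cast; ring
  have hfne : ((m + 2*b)! : ℝ) ≠ 0 := Nat.cast_ne_zero.mpr (Nat.factorial_ne_zero _)
  simp only [meixnerW]
  rw [← e1, ← e2, pow_add]
  field_simp


/-- With `z = 2N`, `z' = 2N + β - 2`, `θ = 2`, the mixed z-measure vanishes on diagrams
with more than `N` rows and on diagrams with at most `N` rows it is, up to a positive
constant, the `N`-point Meixner symplectic ensemble. -/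
theorem zMeasureMix_eq_meixnerSymplectic (N : ℕ) (hN : 1 ≤ N) (β ξ : ℝ)
    (hβ : 0 < β) (hξ0 : 0 < ξ) (hξ1 : ξ < 1) :
    (∀ l : YoungDiagram, N < l.colLen 0 →
      zMeasureMix ((2 * N : ℕ) : ℂ) ((2 * N : ℂ) + (β : ℂ) - 2) ξ 2 l = 0) ∧
    ∃ c : ℝ, 0 < c ∧ ∀ l : YoungDiagram, l.colLen 0 ≤ N →
      zMeasureMix ((2 * N : ℕ) : ℂ) ((2 * N : ℂ) + (β : ℂ) - 2) ξ 2 l =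
        ((c * (∏ k : Fin N, meixnerW β ξ (xPt N l k)) *
          ∏ p ∈ Finset.univ.filter (fun p : Fin N × Fin N => p.1 < p.2),
            (((xPt N l p.1 : ℝ) - (xPt N l p.2 : ℝ)) ^ 2 *
              (((xPt N l p.1 : ℝ) - (xPt N l p.2 : ℝ)) ^ 2 - 1)) : ℝ) : ℂ) := by
  have h1ξ : (0:ℝ) < 1 - ξ := by linarith
  constructor
  · intro l hl
    have hmem : ((N, 0) : ℕ × ℕ) ∈ l.cells := by
      rw [YoungDiagram.mem_cells, YoungDiagram.mem_iff_lt_colLen]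
      exact hl
    have hz : pochP ((2 * N : ℕ) : ℂ) 2 l = 0 := by
      unfold pochP
      refine prod_eq_zero hmem ?_
      push_cast
      ring
    rw [zMeasureMix, hz]
    simp
  · set w : ℝ := N * (2*N + β - 2) with hw
    set D : ℝ := ∏ i ∈ range N, (ξ ^ (2*(N-1-i)) * ((2*(N-1-i)+1)! : ℝ) *
      (ascPochhammer ℝ (2*(N-1-i))).eval β) with hD
    have hDpos : 0 < D := by
      refine prod_pos fun i _ => ?_
      have h2 : (0:ℝ) < ((2*(N-1-i)+1)! : ℝ) := by exact_mod_cast (2*(N-1-i)+1).factorial_pos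
      have h3 := asc_pos hβ (2*(N-1-i))
      positivity
    refine ⟨(1-ξ) ^ w / D, div_pos (Real.rpow_pos_of_pos h1ξ w) hDpos, ?_⟩
    intro l hl
    set r : ℕ → ℕ := l.rowLen with hrdef
    have hr : ∀ a b : ℕ, a ≤ b → r b ≤ r a := fun a b hab => l.rowLen_anti a b hab
    -- complex-to-real reduction pieces
    have hpow : ((1 : ℂ) - (ξ : ℂ)) ^ (((2 * N : ℕ) : ℂ) * ((2 * N : ℂ) + (β : ℂ) - 2) / ((2:ℝ) : ℂ))
        = (((1-ξ) ^ w : ℝ) : ℂ) := by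
      rw [show ((1 : ℂ) - (ξ : ℂ)) = (((1-ξ : ℝ)) : ℂ) by push_cast; ring,
        show (((2 * N : ℕ) : ℂ) * ((2 * N : ℂ) + (β : ℂ) - 2) / ((2:ℝ) : ℂ)) = ((w : ℝ) : ℂ) by
          rw [hw]; push_cast; ring]
      exact (Complex.ofReal_cpow (le_of_lt h1ξ) w).symm
    have hpoch1 : pochP ((2 * N : ℕ) : ℂ) 2 l
        = ((∏ i ∈ range N, ∏ j ∈ range (r i), ((((2*N : ℕ)) : ℝ) + (j : ℝ) - (i : ℝ) * 2) : ℝ) : ℂ) := by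
      rw [show ((2 * N : ℕ) : ℂ) = ((((2*N : ℕ) : ℝ)) : ℂ) by push_cast; ring, pochP_real]
      rw [cells_prod l N hl (fun c => (((2*N : ℕ) : ℝ) + (c.2 : ℝ) - (c.1 : ℝ) * 2))]
    have hpoch2 : pochP ((2 * N : ℂ) + (β : ℂ) - 2) 2 l
        = ((∏ i ∈ range N, ∏ j ∈ range (r i), ((2*(N:ℝ) + β - 2) + (j : ℝ) - (i : ℝ) * 2) : ℝ) : ℂ) := by
      rw [show ((2 * N : ℂ) + (β : ℂ) - 2) = (((2*(N:ℝ) + β - 2) : ℝ) : ℂ) by push_cast; ring,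
        pochP_real]
      rw [cells_prod l N hl (fun c => ((2*(N:ℝ) + β - 2) + (c.2 : ℝ) - (c.1 : ℝ) * 2))]
    have hxicard : (ξ:ℝ) ^ (l.cells.card) = ∏ i ∈ range N, ξ ^ (r i) := by
      calc (ξ:ℝ) ^ (l.cells.card) = ∏ _c ∈ l.cells, ξ := (prod_const ξ).symm
        _ = ∏ i ∈ range N, ∏ _j ∈ range (r i), ξ := cells_prod l N hl (fun _ => ξ)
        _ = ∏ i ∈ range N, ξ ^ (r i) := prod_congr rfl fun i _ => by rw [prod_const, card_range]
    -- H transfer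
    have hHf : Hfun l 2 = ∏ i ∈ range N, ∏ j ∈ range (r i),
        ((r i : ℝ) - j + 2 * ((cc N r j : ℝ) - i) - 2) := by
      unfold Hfun
      rw [cells_prod l N hl]
      refine prod_congr rfl fun i _ => prod_congr rfl fun j _ => ?_
      rw [← colLen_eq_cc l N hl]
      ring
    have hHf' : Hfun' l 2 = ∏ i ∈ range N, ∏ j ∈ range (r i),
        ((r i : ℝ) - j + 2 * ((cc N r j : ℝ) - i) - 1) := by
      unfold Hfun'
      rw [cells_prod l N hl]
      refine prod_congr rfl fun i _ => prod_congr rfl fun j _ => ?_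
      rw [← colLen_eq_cc l N hl]
      ring
    have hH1 := Hmain r hr N
    rw [← hHf] at hH1
    have hH2 := Hmain' r hr N
    rw [← hHf'] at hH2
    -- pair product positivity
    set G1 : ℝ := ∏ i ∈ range N, ∏ k ∈ Ioo i N,
        (((xv N r i : ℝ) - xv N r k) * ((xv N r i : ℝ) - xv N r k - 1)) with hG1def
    set G2 : ℝ := ∏ i ∈ range N, ∏ k ∈ Ioo i N,
        (((xv N r i : ℝ) - xv N r k) * ((xv N r i : ℝ) - xv N r k + 1)) with hG2def
    set XF1 : ℝ := ∏ i ∈ range N, ((xv N r i)! : ℝ) with hXF1def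
    set XF2 : ℝ := ∏ i ∈ range N, ((xv N r i + 1)! : ℝ) with hXF2def
    have hxvgap : ∀ i k : ℕ, i < k → k < N → (xv N r k : ℝ) + 2 ≤ (xv N r i : ℝ) := by
      intro i k hik hkN
      have hrik := hr i k (le_of_lt hik)
      have hnat : xv N r k + 2 ≤ xv N r i := by unfold xv; omega
      exact_mod_cast hnat
    have hG1pos : 0 < G1 := by
      rw [hG1def]
      refine prod_pos fun i hi => prod_pos fun k hk => ?_
      rw [mem_range] at hi; rw [mem_Ioo] at hk
      have := hxvgap i k hk.1 hk.2
      exact mul_pos (by linarith) (by linarith)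
    have hG2pos : 0 < G2 := by
      rw [hG2def]
      refine prod_pos fun i hi => prod_pos fun k hk => ?_
      rw [mem_range] at hi; rw [mem_Ioo] at hk
      have := hxvgap i k hk.1 hk.2
      exact mul_pos (by linarith) (by linarith)
    have hXF1pos : 0 < XF1 := by
      rw [hXF1def]
      exact prod_pos fun i _ => by exact_mod_cast (xv N r i).factorial_pos
    have hXF2pos : 0 < XF2 := by
      rw [hXF2def]
      exact prod_pos fun i _ => by exact_mod_cast (xv N r i + 1).factorial_pos
    have hHH : (Hfun l 2 * Hfun' l 2) * (G1 * G2) = XF1 * XF2 := by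
      calc (Hfun l 2 * Hfun' l 2) * (G1 * G2)
          = (Hfun l 2 * G1) * (Hfun' l 2 * G2) := by ring
        _ = XF1 * XF2 := by rw [hH1, hH2]
    have hHHpos : 0 < Hfun l 2 * Hfun' l 2 := by
      have heq : Hfun l 2 * Hfun' l 2 = (XF1 * XF2) / (G1 * G2) := by
        rw [eq_div_iff (ne_of_gt (mul_pos hG1pos hG2pos))]
        exact hHH
      rw [heq]
      exact div_pos (mul_pos hXF1pos hXF2pos) (mul_pos hG1pos hG2pos)
    -- meixner reindex
    have hmeix : (∏ k : Fin N, meixnerW β ξ (xPt N l k))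
        = ∏ i ∈ range N, meixnerW β ξ (xv N r i) := by
      have h1 : (∏ k : Fin N, meixnerW β ξ (xPt N l k))
          = ∏ a ∈ range N, meixnerW β ξ (l.rowLen (N-1-a) + 2*a) :=
        Fin.prod_univ_eq_prod_range (fun a => meixnerW β ξ (l.rowLen (N-1-a) + 2*a)) N
      rw [h1, ← prod_range_reflect (fun i => meixnerW β ξ (xv N r i)) N]
      refine prod_congr rfl fun a ha => ?_
      rw [mem_range] at ha
      congr 1
      unfold xv
      have h2 : N - 1 - (N-1-a) = a := by omega
      rw [h2]
    -- pairs reindex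
    have hpf : (∏ p ∈ Finset.univ.filter (fun p : Fin N × Fin N => p.1 < p.2),
          (((xPt N l p.1 : ℝ) - (xPt N l p.2 : ℝ)) ^ 2 *
            (((xPt N l p.1 : ℝ) - (xPt N l p.2 : ℝ)) ^ 2 - 1)))
        = G1 * G2 := by
      rw [hG1def, hG2def, ← prod_mul_distrib]
      have hinner : ∀ i ∈ range N,
          (∏ k ∈ Ioo i N, (((xv N r i : ℝ) - xv N r k) * ((xv N r i : ℝ) - xv N r k - 1))) *
          (∏ k ∈ Ioo i N, (((xv N r i : ℝ) - xv N r k) * ((xv N r i : ℝ) - xv N r k + 1)))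
          = ∏ k ∈ Ioo i N,
            ((((xv N r i : ℝ) - xv N r k) * ((xv N r i : ℝ) - xv N r k - 1)) *
             (((xv N r i : ℝ) - xv N r k) * ((xv N r i : ℝ) - xv N r k + 1))) :=
        fun i _ => prod_mul_distrib.symm
      rw [prod_congr rfl hinner, prod_sigma' (range N) (fun i => Ioo i N)
        (fun i k => ((((xv N r i : ℝ) - xv N r k) * ((xv N r i : ℝ) - xv N r k - 1)) *
          (((xv N r i : ℝ) - xv N r k) * ((xv N r i : ℝ) - xv N r k + 1))))]
      refine Finset.prod_bij'
        (fun p _ => (⟨N - 1 - (p.2 : ℕ), N - 1 - (p.1 : ℕ)⟩ : Σ _ : ℕ, ℕ))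
        (fun x _ => ((⟨N - 1 - x.2, by omega⟩ : Fin N), (⟨N - 1 - x.1, by omega⟩ : Fin N)))
        ?_ ?_ ?_ ?_ ?_
      · rintro ⟨p1, p2⟩ hp
        simp only [mem_filter, mem_univ, true_and, Fin.lt_def] at hp
        simp only [Finset.mem_sigma, mem_range, mem_Ioo]
        have h1 := p1.isLt; have h2 := p2.isLt
        omega
      · rintro ⟨x1, x2⟩ hx
        simp only [Finset.mem_sigma, mem_range, mem_Ioo] at hx
        simp only [mem_filter, mem_univ, true_and, Fin.lt_def]
        omega
      · rintro ⟨p1, p2⟩ hp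
        simp only [mem_filter, mem_univ, true_and, Fin.lt_def] at hp
        have h1 := p1.isLt; have h2 := p2.isLt
        simp only [Prod.mk.injEq]
        constructor <;> (apply Fin.ext; simp only []; omega)
      · rintro ⟨x1, x2⟩ hx
        simp only [Finset.mem_sigma, mem_range, mem_Ioo] at hx
        have e1 : N - 1 - (N - 1 - x1) = x1 := by omega
        have e2 : N - 1 - (N - 1 - x2) = x2 := by omega
        show (⟨N - 1 - (N - 1 - x1), N - 1 - (N - 1 - x2)⟩ : Σ _ : ℕ, ℕ) = ⟨x1, x2⟩
        rw [e1, e2]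
      · rintro ⟨p1, p2⟩ hp
        simp only [mem_filter, mem_univ, true_and, Fin.lt_def] at hp
        have h1 := p1.isLt; have h2 := p2.isLt
        have hc1 : ((xPt N l p1 : ℕ) : ℝ) = ((xv N r (N - 1 - (p1 : ℕ)) : ℕ) : ℝ) := by
          have heq : xPt N l p1 = xv N r (N - 1 - (p1 : ℕ)) := by
            unfold xPt xv
            have h3 : N - 1 - (N - 1 - (p1 : ℕ)) = (p1 : ℕ) := by omega
            rw [h3, hrdef]
          exact_mod_cast congrArg (Nat.cast : ℕ → ℝ) heq
        have hc2 : ((xPt N l p2 : ℕ) : ℝ) = ((xv N r (N - 1 - (p2 : ℕ)) : ℕ) : ℝ) := by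
          have heq : xPt N l p2 = xv N r (N - 1 - (p2 : ℕ)) := by
            unfold xPt xv
            have h3 : N - 1 - (N - 1 - (p2 : ℕ)) = (p2 : ℕ) := by omega
            rw [h3, hrdef]
          exact_mod_cast congrArg (Nat.cast : ℕ → ℝ) heq
        rw [hc1, hc2]
        ring
    -- the key per-row identity product
    have hkey : D * ∏ i ∈ range N, (ξ ^ (r i) *
          ((∏ j ∈ range (r i), ((((2*N : ℕ)) : ℝ) + (j : ℝ) - (i : ℝ) * 2)) *
           (∏ j ∈ range (r i), ((2*(N:ℝ) + β - 2) + (j : ℝ) - (i : ℝ) * 2))))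
        = ∏ i ∈ range N, (meixnerW β ξ (xv N r i) *
            (((xv N r i)! : ℝ) * ((xv N r i + 1)! : ℝ))) := by
      rw [hD, ← prod_mul_distrib]
      refine prod_congr rfl fun i hi => ?_
      rw [mem_range] at hi
      have hz1 : (∏ j ∈ range (r i), ((((2*N : ℕ)) : ℝ) + (j : ℝ) - (i : ℝ) * 2))
          = ∏ j ∈ range (r i), (((2*(N-1-i)+1 : ℕ) : ℝ) + 1 + (j : ℝ)) := by
        refine prod_congr rfl fun j _ => ?_
        have h2 : (2*(N-1-i)+1 : ℕ) = 2*N - (2*i+1) := by omega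
        rw [h2, Nat.cast_sub (by omega)]
        push_cast
        ring
      have hz2 : (∏ j ∈ range (r i), ((2*(N:ℝ) + β - 2) + (j : ℝ) - (i : ℝ) * 2))
          = ∏ j ∈ range (r i), (β + ((2*(N-1-i) : ℕ) : ℝ) + (j : ℝ)) := by
        refine prod_congr rfl fun j _ => ?_
        have h2 : (2*(N-1-i) : ℕ) = 2*N - (2*i+2) := by omega
        rw [h2, Nat.cast_sub (by omega)]
        push_cast
        ring
      rw [hz1, hz2]
      have h := row_lemma β ξ (N-1-i) (r i)
      have hxv : r i + 2*(N-1-i) = xv N r i := rfl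
      rw [hxv] at h
      exact h
    -- final assembly
    set Z1 : ℝ := ∏ i ∈ range N, ∏ j ∈ range (r i),
      ((((2*N : ℕ)) : ℝ) + (j : ℝ) - (i : ℝ) * 2) with hZ1def
    set Z2 : ℝ := ∏ i ∈ range N, ∏ j ∈ range (r i),
      ((2*(N:ℝ) + β - 2) + (j : ℝ) - (i : ℝ) * 2) with hZ2def
    set MX : ℝ := ∏ i ∈ range N, meixnerW β ξ (xv N r i) with hMXdef
    have m1 : ∏ i ∈ range N, (ξ ^ (r i) *
          ((∏ j ∈ range (r i), ((((2*N : ℕ)) : ℝ) + (j : ℝ) - (i : ℝ) * 2)) *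
           (∏ j ∈ range (r i), ((2*(N:ℝ) + β - 2) + (j : ℝ) - (i : ℝ) * 2))))
        = (∏ i ∈ range N, ξ ^ (r i)) * (Z1 * Z2) := by
      rw [hZ1def, hZ2def, prod_mul_distrib, prod_mul_distrib]
    have m2 : ∏ i ∈ range N, (meixnerW β ξ (xv N r i) *
          (((xv N r i)! : ℝ) * ((xv N r i + 1)! : ℝ)))
        = MX * (XF1 * XF2) := by
      rw [hMXdef, hXF1def, hXF2def, prod_mul_distrib, prod_mul_distrib]
    have hkey2 := hkey
    rw [m1, m2] at hkey2
    have hcD : (1-ξ) ^ w / D * D = (1-ξ) ^ w := div_mul_cancel₀ _ (ne_of_gt hDpos)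
    have hreal : (1-ξ) ^ w * ξ ^ (l.cells.card) * Z1 * Z2 / (Hfun l 2 * Hfun' l 2)
        = (1-ξ) ^ w / D * (∏ k : Fin N, meixnerW β ξ (xPt N l k)) *
          ∏ p ∈ Finset.univ.filter (fun p : Fin N × Fin N => p.1 < p.2),
            (((xPt N l p.1 : ℝ) - (xPt N l p.2 : ℝ)) ^ 2 *
              (((xPt N l p.1 : ℝ) - (xPt N l p.2 : ℝ)) ^ 2 - 1)) := by
      rw [hxicard, hmeix, hpf, div_eq_iff (ne_of_gt hHHpos)]
      linear_combination (-((1-ξ) ^ w / D * MX)) * hHH + ((1-ξ) ^ w / D) * hkey2 +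
        (-((∏ i ∈ range N, ξ ^ (r i)) * Z1 * Z2)) * hcD
    rw [zMeasureMix, hpow, hpoch1, hpoch2]
    rw [show ((ξ:ℂ)) ^ (l.cells.card) = (((ξ ^ (l.cells.card) : ℝ)) : ℂ) by push_cast; ring]
    rw [← Complex.ofReal_mul, ← Complex.ofReal_mul, ← Complex.ofReal_mul,
      ← Complex.ofReal_mul, ← Complex.ofReal_div]
    rw [Complex.ofReal_inj]
    exact hreal
end
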